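/- Fix n1 ≥ 1 and j ∈ [n1]. For all subsets I, J ⊆ [n1]∖{j}, the matrices M_I satisfy M_I · M_J = M_{I△J}, where I△J denotes the symmetric difference. In particular, each M_I is an involution (M_I² = I_{n1}), and the set G_j = { M_I : I ⊆ [n1]∖{j} } is a finite abelian group under matrix multiplication. -/

import Mathlib

open Matrix

noncomputable section

section Aux

variable {n1 : ℕ} (j : Fin n1) (I J : Finset (Fin n1))

private lemma aux_AA (hI : j ∉ I) :
    (∑ k ∈ I, single j k (1:ℝ)) * (∑ k ∈ J, single j k (1:ℝ)) = 0 := by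
  rw [Finset.sum_mul_sum]
  refine Finset.sum_eq_zero fun k hk => Finset.sum_eq_zero fun l hl => ?_
  have hne : k ≠ j := fun h => hI (h ▸ hk)
  exact Matrix.single_mul_single_of_ne (1:ℝ) j k j hne 1

private lemma aux_AD :
    (∑ k ∈ I, single j k (1:ℝ)) * (∑ k ∈ J, single k k (1:ℝ)) =
      ∑ k ∈ I ∩ J, single j k (1:ℝ) := by
  rw [Finset.sum_mul_sum, ← Finset.sum_ite_mem]
  refine Finset.sum_congr rfl fun k hk => ?_
  have : ∀ l ∈ J, single j k (1:ℝ) * single l l (1:ℝ) =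
      if k = l then single j k (1:ℝ) else 0 := by
    intro l hl
    by_cases h : k = l
    · subst h; simp [single_mul_single_same]
    · simp [h, Matrix.single_mul_single_of_ne (i := j) (j := k) (h := h) (d := 1)]
  rw [Finset.sum_congr rfl this, Finset.sum_ite_eq]

private lemma aux_DA (hI : j ∉ I) :
    (∑ k ∈ I, single k k (1:ℝ)) * (∑ k ∈ J, single j k (1:ℝ)) = 0 := by
  rw [Finset.sum_mul_sum]
  refine Finset.sum_eq_zero fun k hk => Finset.sum_eq_zero fun l hl => ?_
  have hne : k ≠ j := fun h => hI (h ▸ hk)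
  exact Matrix.single_mul_single_of_ne (1:ℝ) k k j hne 1

private lemma aux_DD :
    (∑ k ∈ I, single k k (1:ℝ)) * (∑ k ∈ J, single k k (1:ℝ)) =
      ∑ k ∈ I ∩ J, single k k (1:ℝ) := by
  rw [Finset.sum_mul_sum, ← Finset.sum_ite_mem]
  refine Finset.sum_congr rfl fun k hk => ?_
  have : ∀ l ∈ J, single k k (1:ℝ) * single l l (1:ℝ) =
      if k = l then single k k (1:ℝ) else 0 := by
    intro l hl
    by_cases h : k = l
    · subst h; simp [single_mul_single_same]
    · simp [h, Matrix.single_mul_single_of_ne (i := k) (j := k) (h := h) (d := 1)]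
  rw [Finset.sum_congr rfl this, Finset.sum_ite_eq]

private lemma aux_symmDiff {M : Type*} [AddCommGroup M] (f : Fin n1 → M) :
    ∑ k ∈ symmDiff I J, f k = (∑ k ∈ I, f k + ∑ k ∈ J, f k) - 2 • ∑ k ∈ I ∩ J, f k := by
  have h1 : I \ J = I \ (I ∩ J) := by rw [Finset.sdiff_inter_self_left]
  have h2 : J \ I = J \ (I ∩ J) := by
    rw [Finset.inter_comm, Finset.sdiff_inter_self_left]
  have hu : symmDiff I J = (I \ J) ∪ (J \ I) := by
    rw [symmDiff_def, Finset.sup_eq_union]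
  rw [hu, Finset.sum_union (disjoint_sdiff_sdiff), h1, h2,
    Finset.sum_sdiff_eq_sub Finset.inter_subset_left,
    Finset.sum_sdiff_eq_sub Finset.inter_subset_right, two_smul]
  abel

end Aux

/-- The flip matrix `M_I = I − Σ_{k∈I} e_j e_kᵀ − 2 Σ_{k∈I} e_k e_kᵀ`. -/
def Mflip {n1 : ℕ} (j : Fin n1) (I : Finset (Fin n1)) : Matrix (Fin n1) (Fin n1) ℝ :=
  1 - (∑ k ∈ I, Matrix.single j k (1 : ℝ))
    - (2 : ℝ) • (∑ k ∈ I, Matrix.single k k (1 : ℝ))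

/-- `M_I · M_J = M_{I △ J}`; in particular each `M_I` is an involution, the
identity is `M_∅`, the family is closed under multiplication and commutative, so
`G_j = { M_I : I ⊆ [n1]∖{j} }` is a finite abelian group under matrix multiplication. -/
theorem Mflip_mul (n1 : ℕ) (hn1 : 1 ≤ n1) (j : Fin n1)
    (I J : Finset (Fin n1)) (hI : j ∉ I) (hJ : j ∉ J) :
    Mflip j I * Mflip j J = Mflip j (symmDiff I J)
    ∧ Mflip j I * Mflip j I = 1
    ∧ Mflip j (∅ : Finset (Fin n1)) = 1
    ∧ Mflip j I * Mflip j J = Mflip j J * Mflip j I := by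
  have key : ∀ (I J : Finset (Fin n1)), j ∉ I → j ∉ J →
      Mflip j I * Mflip j J = Mflip j (symmDiff I J) := by
    intro I J hI hJ
    simp only [Mflip]
    rw [aux_symmDiff I J (fun k => single j k (1:ℝ)),
        aux_symmDiff I J (fun k => single k k (1:ℝ))]
    simp only [mul_sub, sub_mul, one_mul, mul_one, smul_mul_assoc, mul_smul_comm,
      aux_AA j I J hI, aux_AD j I J, aux_DA j I J hI, aux_DD I J, smul_zero, zero_sub,
      sub_zero]
    simp only [two_smul, smul_add]
    abel
  have hempty : Mflip j (∅ : Finset (Fin n1)) = 1 := by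
    simp [Mflip]
  refine ⟨key I J hI hJ, ?_, hempty, ?_⟩
  · rw [key I I hI hI, symmDiff_self]
    simpa using hempty
  · rw [key I J hI hJ, key J I hJ hI, symmDiff_comm]
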